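/- Let (P,≻,q) be a problem and k > 1. Then GS^k(P,≻,q) is stable at (P,≻,q) if and only if GS^k(P,≻,q) = GS(P,≻,q). -/

import Mathlib

/-!
School choice framework following Bonkoungou–Nesterov,
"Reforms meet fairness concerns in school and college admissions".

Students `I` and schools `S` are finite types with `|I| > |S|`.
A strict preference relation of a student over `S ∪ {∅}` is represented by a list
of `Option S` containing every element exactly once (earlier = more preferred);
`none` is the outside option.  A strict priority order of a school is a list of
`I` containing every student exactly once (earlier = higher priority).
-/

namespace SchoolChoice

variable {I S : Type*} [Fintype I] [DecidableEq I] [Fintype S] [DecidableEq S]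

/-- `p` is a strict preference relation on `S ∪ {∅}`: a ranking list containing every
element of `Option S` exactly once. -/
def ValidPref (p : List (Option S)) : Prop := p.Nodup ∧ ∀ x : Option S, x ∈ p

/-- `pr` is a strict priority order: a ranking list containing every student exactly once. -/
def ValidPrio (pr : List I) : Prop := pr.Nodup ∧ ∀ i : I, i ∈ pr

/-- `a` is strictly preferred to `b` under the preference relation `p`. -/
def prefLt (p : List (Option S)) (a b : Option S) : Prop := p.idxOf a < p.idxOf b

/-- `i` has strictly higher priority than `j` under the priority order `pr`. -/
def prioLt (pr : List I) (i j : I) : Prop := pr.idxOf i < pr.idxOf j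

instance (p : List (Option S)) (a b : Option S) : Decidable (prefLt p a b) :=
  inferInstanceAs (Decidable (_ < _))

instance (pr : List I) (i j : I) : Decidable (prioLt pr i j) :=
  inferInstanceAs (Decidable (_ < _))

/-- The acceptable schools of `p` (those preferred to the outside option), in preference
order. -/
def acceptables (p : List (Option S)) : List S := (p.takeWhile Option.isSome).filterMap id

/-- The truncation of `p` after its `k`-th acceptable school: the preference relation
listing, in the same order, only the `min k _` most-preferred acceptable schools of `p`,
all other schools being unacceptable (kept below `none` in their original order). -/
def truncate (p : List (Option S)) (k : ℕ) : List (Option S) :=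
  ((acceptables p).take k).map some ++
    none :: p.filter (fun x => decide (x ≠ none ∧ x ∉ ((acceptables p).take k).map some))

/-- `μ` is a matching: it respects the capacities `q`. -/
def IsMatching (q : S → ℕ) (μ : I → Option S) : Prop :=
  ∀ s : S, (Finset.univ.filter (fun i => μ i = some s)).card ≤ q s

/-- The pair `(i, s)` blocks `μ` under the problem `(P, prio, q)`. -/
def Blocks (P : I → List (Option S)) (prio : S → List I) (q : S → ℕ)
    (μ : I → Option S) (i : I) (s : S) : Prop :=
  prefLt (P i) (some s) (μ i) ∧
    ((Finset.univ.filter (fun j => μ j = some s)).card < q s ∨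
      ∃ j : I, μ j = some s ∧ prioLt (prio s) i j)

/-- `i` is a blocking student for `μ` under `(P, prio, q)`. -/
def BlockingStudent (P : I → List (Option S)) (prio : S → List I) (q : S → ℕ)
    (μ : I → Option S) (i : I) : Prop :=
  ∃ s : S, Blocks P prio q μ i s

/-- `μ` is individually rational under `P`. -/
def IndividuallyRational (P : I → List (Option S)) (μ : I → Option S) : Prop :=
  ∀ i : I, ¬ prefLt (P i) none (μ i)

/-- `μ` is stable at `(P, prio, q)`. -/
def IsStable (P : I → List (Option S)) (prio : S → List I) (q : S → ℕ)
    (μ : I → Option S) : Prop :=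
  IndividuallyRational P μ ∧ ∀ i : I, ¬ BlockingStudent P prio q μ i

/-- The number of blocking students for `μ` under `(P, prio, q)`. -/
noncomputable def numBlocking (P : I → List (Option S)) (prio : S → List I) (q : S → ℕ)
    (μ : I → Option S) : ℕ :=
  {i : I | BlockingStudent P prio q μ i}.ncard

/-! ### The Gale–Shapley student-proposing deferred acceptance mechanism

The state `σ : I → ℕ` records, for each student, how many of her acceptable schools
have already rejected her; she currently applies to the `σ i`-th school on her list
(if any).  At each round every school tentatively keeps the `q s` highest-priority
students among its current applicants and rejects the rest, who move on. -/

/-- The school student `i` currently applies to. -/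
def daTarget (P : I → List (Option S)) (σ : I → ℕ) (i : I) : Option S :=
  (acceptables (P i))[σ i]?

/-- The students tentatively held by school `s`: the `q s` highest-priority current
applicants. -/
def daHeld (P : I → List (Option S)) (prio : S → List I) (q : S → ℕ)
    (σ : I → ℕ) (s : S) : List I :=
  ((prio s).filter (fun i => decide (daTarget P σ i = some s))).take (q s)

/-- One round of deferred acceptance: every rejected student moves to her next choice. -/
def daStep (P : I → List (Option S)) (prio : S → List I) (q : S → ℕ)
    (σ : I → ℕ) : I → ℕ := fun i =>
  match daTarget P σ i with
  | none => σ i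
  | some s => if i ∈ daHeld P prio q σ s then σ i else σ i + 1

/-- The Gale–Shapley (student-proposing deferred acceptance) mechanism.  Iterating the
round map `|I| * |S| + 1` times is guaranteed to reach the terminal state. -/
def GS (P : I → List (Option S)) (prio : S → List I) (q : S → ℕ) : I → Option S :=
  fun i =>
    let σ := (daStep P prio q)^[Fintype.card I * Fintype.card S + 1] (fun _ => 0)
    match daTarget P σ i with
    | none => none
    | some s => if i ∈ daHeld P prio q σ s then some s else none

/-- The constrained Gale–Shapley mechanism `GS^k`. -/
def GSk (k : ℕ) (P : I → List (Option S)) (prio : S → List I) (q : S → ℕ) : I → Option S :=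
  GS (fun i => truncate (P i) k) prio q

/-! ### The Boston (immediate acceptance) mechanism -/

/-- Round `t` of the Boston mechanism: each not-yet-accepted student applies to her
`t`-th ranked acceptable school (0-indexed), and each school permanently accepts, up to
its remaining capacity, its highest-priority new applicants. -/
def bostonRound (P : I → List (Option S)) (prio : S → List I) (q : S → ℕ)
    (μ : I → Option S) (t : ℕ) : I → Option S := fun i =>
  match μ i with
  | some s => some s
  | none =>
    match (acceptables (P i))[t]? with
    | none => none
    | some s =>
      if i ∈ ((prio s).filter
            (fun j => decide (μ j = none ∧ (acceptables (P j))[t]? = some s))).take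
          (q s - (Finset.univ.filter (fun j => μ j = some s)).card)
      then some s else none

/-- The Boston (immediate acceptance) mechanism. -/
def Boston (P : I → List (Option S)) (prio : S → List I) (q : S → ℕ) : I → Option S :=
  (List.range (Fintype.card S)).foldl (bostonRound P prio q) (fun _ => none)

/-- The constrained Boston mechanism `β^k`. -/
def Bostonk (k : ℕ) (P : I → List (Option S)) (prio : S → List I) (q : S → ℕ) :
    I → Option S :=
  Boston (fun i => truncate (P i) k) prio q

/-! ### The first-preference-first mechanism -/

/-- The adjusted priority profile: each first-preference-first school (member of `fpf`)
ranks students first by the rank they assign to it under `P` (counting the ranking of the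
outside option as well), ties broken by the original priority; equal-preference schools
keep their original priority. -/
def fpfPrio (fpf : Finset S) (P : I → List (Option S)) (prio : S → List I) : S → List I :=
  fun s =>
    if s ∈ fpf then
      (List.range (Fintype.card S + 1)).flatMap
        (fun r => (prio s).filter (fun i => decide ((P i).idxOf (some s) = r)))
    else prio s

/-- The first-preference-first mechanism with set `fpf` of first-preference-first
schools: Gale–Shapley run on the adjusted priorities. -/
def FPF (fpf : Finset S) (P : I → List (Option S)) (prio : S → List I) (q : S → ℕ) :
    I → Option S :=
  GS P (fpfPrio fpf P prio) q

/-- The constrained first-preference-first mechanism `FPF^k`. -/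
def FPFk (fpf : Finset S) (k : ℕ) (P : I → List (Option S)) (prio : S → List I)
    (q : S → ℕ) : I → Option S :=
  FPF fpf (fun i => truncate (P i) k) prio q

/-! ### Manipulation and equilibrium notions -/

/-- Student `i` is a manipulating student of the mechanism `φ` (with priorities and
capacities fixed) at the true profile `P`. -/
def ManipulatingStudent (φ : (I → List (Option S)) → I → Option S)
    (P : I → List (Option S)) (i : I) : Prop :=
  ∃ Q : List (Option S), ValidPref Q ∧
    prefLt (P i) (φ (Function.update P i Q) i) (φ P i)

/-- The mechanism `φ` is not manipulable at `P`. -/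
def NotManipulable (φ : (I → List (Option S)) → I → Option S)
    (P : I → List (Option S)) : Prop :=
  ∀ i : I, ¬ ManipulatingStudent φ P i

/-- `P'` is a Nash equilibrium of the game `(φ, P)` in which the sophisticated students
are the members of `M` (who may misreport, and best respond) and all other (sincere)
students report truthfully. -/
def NashEq (φ : (I → List (Option S)) → I → Option S) (P : I → List (Option S))
    (M : Finset I) (P' : I → List (Option S)) : Prop :=
  (∀ i, ValidPref (P' i)) ∧ (∀ i ∉ M, P' i = P i) ∧
    ∀ i ∈ M, ∀ Q : List (Option S), ValidPref Q →
      ¬ prefLt (P i) (φ (Function.update P' i Q) i) (φ P' i)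

/-! ### Semi-sophisticated students -/

/-- Student `i` is guaranteed her first choice `s`: `s` is her most-preferred acceptable
school and `i` is among the `q s` highest-priority students at `s`. -/
def GuaranteedFirstChoice (P : I → List (Option S)) (prio : S → List I) (q : S → ℕ)
    (i : I) (s : S) : Prop :=
  (acceptables (P i)).head? = some s ∧ (prio s).idxOf i < q s

instance (P : I → List (Option S)) (prio : S → List I) (q : S → ℕ) (i : I) (s : S) :
    Decidable (GuaranteedFirstChoice P prio q i s) :=
  inferInstanceAs (Decidable (_ ∧ _))

/-- School `s` is competitive: at least `q s` students are guaranteed their first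
choice `s`. -/
def Competitive (P : I → List (Option S)) (prio : S → List I) (q : S → ℕ) (s : S) : Prop :=
  q s ≤ (Finset.univ.filter (fun i => GuaranteedFirstChoice P prio q i s)).card

instance (P : I → List (Option S)) (prio : S → List I) (q : S → ℕ) (s : S) :
    Decidable (Competitive P prio q s) :=
  inferInstanceAs (Decidable (_ ≤ _))

/-- `P'` is a Nash equilibrium of the game `(GS^ℓ, P)` with semi-sophisticated students:
every student guaranteed her first choice reports truthfully; every other student reports
truthfully if she has at most `ℓ` acceptable schools or all her acceptable schools are
competitive, and otherwise lists as acceptable, in the order given by her true preference,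
only her acceptable schools that are not competitive. -/
def SemiSophProfile (ℓ : ℕ) (P : I → List (Option S)) (prio : S → List I) (q : S → ℕ)
    (P' : I → List (Option S)) : Prop :=
  ∀ i : I,
    ((∃ s : S, GuaranteedFirstChoice P prio q i s) → P' i = P i) ∧
    (¬ (∃ s : S, GuaranteedFirstChoice P prio q i s) →
      (((acceptables (P i)).length ≤ ℓ ∨ ∀ s ∈ acceptables (P i), Competitive P prio q s) →
          P' i = P i) ∧
      (¬ ((acceptables (P i)).length ≤ ℓ ∨
            ∀ s ∈ acceptables (P i), Competitive P prio q s) →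
          acceptables (P' i) =
            (acceptables (P i)).filter (fun s => decide (¬ Competitive P prio q s))))


/-! ### Auxiliary lemmas for the proof -/

section Aux

lemma lawfulBEq_unique {α : Type*} (i1 i2 : BEq α) [l1 : @LawfulBEq α i1] [l2 : @LawfulBEq α i2] :
    i1 = i2 := by
  have h : @BEq.beq α i1 = @BEq.beq α i2 := by
    funext a b
    by_cases h : a = b
    · subst h
      rw [@beq_self_eq_true α i1 inferInstance, @beq_self_eq_true α i2 inferInstance]
    · rw [(@beq_eq_false_iff_ne α i1 l1 a b).2 h, (@beq_eq_false_iff_ne α i2 l2 a b).2 h]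
  cases i1; cases i2
  congr 1

lemma indexOf_norm {S : Type*} [DecidableEq S] (a : Option S) (l : List (Option S)) :
    l.idxOf a = @List.idxOf (Option S) (@instBEqOfDecidableEq _ _) a l := by
  congr 1
  exact lawfulBEq_unique _ _

lemma pairwise_indexOf {α : Type*} [DecidableEq α] {l : List α} (h : l.Nodup) :
    l.Pairwise (fun a b => l.idxOf a < l.idxOf b) := by
  rw [List.pairwise_iff_getElem]
  intro i j hi hj hij
  rw [List.Nodup.idxOf_getElem h i hi, List.Nodup.idxOf_getElem h j hj]
  exact hij

/-- If a pairwise-`f`-increasing list has at least `q` entries with `f x < c`,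
then every entry of `l.take q` has `f x < c`. -/
lemma take_key_lt {α : Type*} (f : α → ℕ) (c : ℕ) :
    ∀ (l : List α) (q : ℕ), l.Pairwise (fun a b => f a < f b) →
      q ≤ (l.filter (fun x => decide (f x < c))).length →
      ∀ x ∈ l.take q, f x < c := by
  intro l
  induction l with
  | nil => intro q _ _ x hx; simp at hx
  | cons a t ih =>
    intro q hp hq x hx
    rcases q with _ | q'
    · simp at hx
    rw [List.take_succ_cons] at hx
    by_cases ha : f a < c
    · rw [List.filter_cons_of_pos (by simpa using ha)] at hq
      rcases List.mem_cons.1 hx with rfl | hx'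
      · exact ha
      · exact ih q' (List.pairwise_cons.1 hp).2 (by simpa using hq) x hx'
    · exfalso
      have hfe : (a :: t).filter (fun x => decide (f x < c)) = [] := by
        rw [List.filter_cons_of_neg (by simpa using ha)]
        rw [List.filter_eq_nil_iff]
        intro b hb
        have := (List.pairwise_cons.1 hp).1 b hb
        simp only [decide_eq_true_eq]
        omega
      rw [hfe] at hq
      simp at hq

/-- If `x ∈ l` but `x ∉ l.take q`, then at least `q` entries of `l` have key `< f x`. -/
lemma not_take_key_ge {α : Type*} (f : α → ℕ) :
    ∀ (l : List α) (q : ℕ) (x : α), l.Pairwise (fun a b => f a < f b) →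
      x ∈ l → x ∉ l.take q →
      q ≤ (l.filter (fun y => decide (f y < f x))).length := by
  intro l
  induction l with
  | nil => intro q x _ hx; simp at hx
  | cons a t ih =>
    intro q x hp hx hnx
    rcases q with _ | q'
    · exact Nat.zero_le _
    rw [List.take_succ_cons] at hnx
    rcases List.mem_cons.1 hx with rfl | hx'
    · exact absurd (List.mem_cons_self) hnx
    · have hax : f a < f x := (List.pairwise_cons.1 hp).1 x hx'
      rw [List.filter_cons_of_pos (by simpa using hax)]
      have := ih q' x (List.pairwise_cons.1 hp).2 hx' (fun h => hnx (List.mem_cons_of_mem _ h))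
      simpa using this

lemma nodup_subset_length {α : Type*} [DecidableEq α] {l l' : List α}
    (hl : l.Nodup) (h : l ⊆ l') : l.length ≤ l'.length := by
  calc l.length = l.toFinset.card := (List.toFinset_card_of_nodup hl).symm
    _ ≤ l'.toFinset.card := Finset.card_le_card (fun x hx => by
        rw [List.mem_toFinset] at *; exact h hx)
    _ ≤ l'.length := List.toFinset_card_le _

lemma iterate_fixed_of_measure {α : Type*} (f : α → α) (m : α → ℕ) (B : ℕ)
    (hm : ∀ a, m a ≤ B) (hs : ∀ a, f a ≠ a → m a < m (f a)) (a : α) :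
    f (f^[B+1] a) = f^[B+1] a := by
  have key : ∀ n : ℕ, (∀ t < n, f (f^[t] a) ≠ f^[t] a) → n ≤ m (f^[n] a) := by
    intro n
    induction n with
    | zero => intro _; exact Nat.zero_le _
    | succ n ih =>
      intro h
      have h1 := ih (fun t ht => h t (Nat.lt_succ_of_lt ht))
      have h2 : f (f^[n] a) ≠ f^[n] a := h n (Nat.lt_succ_self n)
      have := hs _ h2
      rw [Function.iterate_succ_apply']
      omega
  have hex : ∃ t, t ≤ B ∧ f (f^[t] a) = f^[t] a := by
    by_contra hc
    push_neg at hc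
    have := key (B+1) (fun t ht => hc t (Nat.lt_succ_iff.1 ht))
    have := hm (f^[B+1] a)
    omega
  rcases hex with ⟨t, htB, hfix⟩
  have hiter : ∀ u : ℕ, f^[t + u] a = f^[t] a := by
    intro u
    induction u with
    | zero => rfl
    | succ u ih =>
      rw [show t + (u + 1) = (t + u) + 1 by omega, Function.iterate_succ_apply', ih]
      exact hfix
  have h1 : f^[B+1] a = f^[t] a := by
    have := hiter (B + 1 - t)
    rwa [Nat.add_sub_cancel' (by omega)] at this
  rw [h1]
  exact hfix

lemma list_filter_length_eq_card {I : Type*} [Fintype I] [DecidableEq I]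
    {pr : List I} (hpr : pr.Nodup ∧ ∀ i : I, i ∈ pr) (Q : I → Prop) [DecidablePred Q] :
    (pr.filter (fun i => decide (Q i))).length = (Finset.univ.filter Q).card := by
  rw [← List.toFinset_card_of_nodup (hpr.1.filter _)]
  congr 1
  ext x
  simp only [List.mem_toFinset, List.mem_filter, Finset.mem_filter, Finset.mem_univ,
    decide_eq_true_eq, true_and]
  exact ⟨fun h => h.2, fun h => ⟨hpr.2 x, h⟩⟩

end Aux

section Pref

variable {S : Type*} [Fintype S] [DecidableEq S]

omit [Fintype S] in
lemma map_some_filterMap_id (l : List (Option S)) (h : ∀ x ∈ l, x.isSome) :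
    (l.filterMap id).map some = l := by
  induction l with
  | nil => rfl
  | cons a t ih =>
    rcases a with _ | s
    · exact absurd (h none (List.mem_cons_self)) (by simp)
    · rw [List.filterMap_cons]
      simpa using ih (fun x hx => h x (List.mem_cons_of_mem _ hx))

omit [Fintype S] in
lemma map_some_acceptables (p : List (Option S)) :
    (acceptables p).map some = p.takeWhile Option.isSome :=
  map_some_filterMap_id _ (fun _ hx => List.mem_takeWhile_imp hx)

omit [Fintype S] in
lemma acceptables_nodup {p : List (Option S)} (hp : p.Nodup) : (acceptables p).Nodup := by
  have h1 : (p.takeWhile Option.isSome).Nodup := hp.sublist (List.takeWhile_sublist _)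
  rw [← map_some_acceptables] at h1
  exact h1.of_map _

lemma length_acceptables_le {p : List (Option S)} (hp : p.Nodup) :
    (acceptables p).length ≤ Fintype.card S :=
  (acceptables_nodup hp).length_le_card

omit [Fintype S] in
lemma indexOf_none_eq {p : List (Option S)} (hp : ValidPref p) :
    p.idxOf none = (acceptables p).length := by
  have hnm : (none : Option S) ∉ p.takeWhile Option.isSome := by
    intro h; simpa using List.mem_takeWhile_imp h
  conv_lhs => rw [← List.takeWhile_append_dropWhile (p := Option.isSome) (l := p)]
  rw [List.idxOf_append_of_notMem hnm]
  rw [← map_some_acceptables, List.length_map]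
  have hd : p.dropWhile Option.isSome ≠ [] := by
    intro h
    have h2 := hp.2 none
    rw [← List.takeWhile_append_dropWhile (p := Option.isSome) (l := p), h,
      List.append_nil] at h2
    exact hnm h2
  rcases h : p.dropWhile Option.isSome with _ | ⟨a, t⟩
  · exact absurd h hd
  · have hne := List.head?_dropWhile_not Option.isSome p
    rw [h] at hne
    simp only [List.head?_cons] at hne
    have : a = none := by
      rcases a with _ | s
      · rfl
      · simp at hne
    subst this
    rw [List.idxOf_cons_eq _ rfl]
    simp

omit [Fintype S] in
lemma indexOf_some_eq {p : List (Option S)} (s : S) (hs : s ∈ acceptables p) :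
    p.idxOf (some s) = (acceptables p).idxOf s := by
  conv_lhs => rw [← List.takeWhile_append_dropWhile (p := Option.isSome) (l := p)]
  rw [List.idxOf_append_of_mem (by
    rw [← map_some_acceptables]; exact List.mem_map_of_mem hs)]
  rw [← map_some_acceptables]
  generalize acceptables p = l
  induction l with
  | nil => rfl
  | cons a t ih =>
    by_cases h : a = s
    · subst h
      rw [List.map_cons, List.idxOf_cons_eq _ rfl, List.idxOf_cons_eq _ rfl]
    · rw [List.map_cons, List.idxOf_cons_ne _ (by simpa using h),
        List.idxOf_cons_ne _ h, ih]

omit [Fintype S] in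
lemma mem_acceptables_iff {p : List (Option S)} (hp : ValidPref p) (s : S) :
    s ∈ acceptables p ↔ p.idxOf (some s) < p.idxOf none := by
  constructor
  · intro hs
    rw [indexOf_some_eq s hs, indexOf_none_eq hp]
    exact List.idxOf_lt_length_iff.2 hs
  · intro h
    by_contra hs
    rw [indexOf_none_eq hp] at h
    have hmem : some s ∈ p := hp.2 _
    have hsplit : some s ∈ p.takeWhile Option.isSome ∨ some s ∈ p.dropWhile Option.isSome := by
      rw [← List.mem_append, List.takeWhile_append_dropWhile]; exact hmem
    rcases hsplit with h1 | h1
    · rw [← map_some_acceptables] at h1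
      exact hs (by simpa using h1)
    · have hnm : some s ∉ p.takeWhile Option.isSome := by
        rw [← map_some_acceptables]; intro hc; exact hs (by simpa using hc)
      have h2 : p.idxOf (some s) =
          (acceptables p).length + List.idxOf (some s)
            (p.dropWhile Option.isSome) := by
        conv_lhs => rw [← List.takeWhile_append_dropWhile (p := Option.isSome) (l := p)]
        rw [List.idxOf_append_of_notMem hnm, ← map_some_acceptables, List.length_map]
      omega

omit [Fintype S] in
lemma indexOf_acc_lt_iff {p : List (Option S)} {s t : S}
    (hs : s ∈ acceptables p) (ht : t ∈ acceptables p) :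
    (acceptables p).idxOf s < (acceptables p).idxOf t ↔
      p.idxOf (some s) < p.idxOf (some t) := by
  rw [indexOf_some_eq s hs, indexOf_some_eq t ht]

omit [Fintype S] in
lemma acceptables_truncate {p : List (Option S)} (k : ℕ) :
    acceptables (truncate p k) = (acceptables p).take k := by
  unfold truncate acceptables
  rw [List.takeWhile_append_of_pos (by
    intro a ha
    rcases List.mem_map.1 ha with ⟨s, _, rfl⟩
    rfl)]
  rw [List.takeWhile_cons_of_neg (by simp)]
  rw [List.append_nil]
  simp [← List.map_take, List.filterMap_map]

omit [Fintype S] in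
lemma truncate_valid {p : List (Option S)} (hp : ValidPref p) (k : ℕ) :
    ValidPref (truncate p k) := by
  have haccnd : ((acceptables p).take k).Nodup := (acceptables_nodup hp.1).sublist
    (List.take_sublist _ _)
  constructor
  · unfold truncate
    apply List.Nodup.append
    · exact haccnd.map (fun a b => by simp)
    · rw [List.nodup_cons]
      constructor
      · intro h
        rcases List.mem_filter.1 h with ⟨_, h2⟩
        simp at h2
      · exact hp.1.filter _
    · intro x hx hy
      rcases List.mem_map.1 hx with ⟨s, hs, rfl⟩
      rcases List.mem_cons.1 hy with h | h
      · simp at h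
      · rcases List.mem_filter.1 h with ⟨_, h2⟩
        rw [decide_eq_true_eq] at h2
        exact h2.2 hx
  · intro x
    unfold truncate
    rcases x with _ | s
    · exact List.mem_append_right _ (List.mem_cons_self)
    · by_cases h : some s ∈ ((acceptables p).take k).map some
      · exact List.mem_append_left _ h
      · refine List.mem_append_right _ (List.mem_cons_of_mem _ ?_)
        exact List.mem_filter.2 ⟨hp.2 _, by simp only [decide_eq_true_eq]; exact ⟨by simp, h⟩⟩

lemma indexOf_take {α : Type*} [DecidableEq α] {l : List α} {k : ℕ} {a : α}
    (h : a ∈ l.take k) : l.idxOf a = (l.take k).idxOf a := by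
  conv_lhs => rw [← List.take_append_drop k l]
  rw [List.idxOf_append_of_mem h]

end Pref

section DA

variable {I S : Type*} [Fintype I] [DecidableEq I] [Fintype S] [DecidableEq S]

/-- The list of current applicants of school `s`, in priority order. -/
def appl (P : I → List (Option S)) (prio : S → List I) (σ : I → ℕ) (s : S) : List I :=
  (prio s).filter (fun i => decide (daTarget P σ i = some s))

/-- The tentative matching associated with a state. -/
def daMatch (P : I → List (Option S)) (prio : S → List I) (q : S → ℕ)
    (σ : I → ℕ) (i : I) : Option S :=
  match daTarget P σ i with
  | none => none
  | some s => if i ∈ daHeld P prio q σ s then some s else none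

variable {P : I → List (Option S)} {prio : S → List I} {q : S → ℕ}

lemma daHeld_eq (σ : I → ℕ) (s : S) :
    daHeld P prio q σ s = (appl P prio σ s).take (q s) := rfl

lemma GS_eq_daMatch :
    GS P prio q = fun i => daMatch P prio q
      ((daStep P prio q)^[Fintype.card I * Fintype.card S + 1] (fun _ => 0)) i := rfl

lemma mem_appl {σ : I → ℕ} {s : S} {i : I} (hprio : ∀ s, ValidPrio (prio s)) :
    i ∈ appl P prio σ s ↔ daTarget P σ i = some s := by
  unfold appl
  rw [List.mem_filter]
  simp only [decide_eq_true_eq]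
  exact ⟨fun h => h.2, fun h => ⟨(hprio s).2 i, h⟩⟩

lemma appl_nodup {σ : I → ℕ} {s : S} (hprio : ∀ s, ValidPrio (prio s)) :
    (appl P prio σ s).Nodup := (hprio s).1.filter _

lemma appl_pairwise {σ : I → ℕ} {s : S} (hprio : ∀ s, ValidPrio (prio s)) :
    (appl P prio σ s).Pairwise
      (fun a b => (prio s).idxOf a < (prio s).idxOf b) :=
  (pairwise_indexOf (hprio s).1).sublist List.filter_sublist

lemma target_spec {σ : I → ℕ} {i : I} {s : S} (hP : ∀ i, ValidPref (P i))
    (h : daTarget P σ i = some s) :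
    σ i < (acceptables (P i)).length ∧ s ∈ acceptables (P i) ∧
      (acceptables (P i)).idxOf s = σ i := by
  unfold daTarget at h
  rw [List.getElem?_eq_some_iff] at h
  rcases h with ⟨hlt, he⟩
  refine ⟨hlt, ?_, ?_⟩
  · rw [← he]; exact List.getElem_mem _
  · rw [← he]; exact List.Nodup.idxOf_getElem (acceptables_nodup (hP i).1) _ _

lemma target_of_idx {σ : I → ℕ} {i : I} {s : S}
    (hmem : s ∈ acceptables (P i)) (hidx : (acceptables (P i)).idxOf s = σ i) :
    daTarget P σ i = some s := by
  unfold daTarget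
  rw [← hidx]
  exact List.getElem?_idxOf hmem

lemma daStep_cases (σ : I → ℕ) (i : I) :
    (daStep P prio q σ i = σ i ∧
      (∀ s, daTarget P σ i = some s → i ∈ daHeld P prio q σ s)) ∨
    (daStep P prio q σ i = σ i + 1 ∧
      ∃ s, daTarget P σ i = some s ∧ i ∉ daHeld P prio q σ s) := by
  unfold daStep
  rcases h : daTarget P σ i with _ | s
  · exact Or.inl ⟨rfl, fun s hs => by simp [h] at hs⟩
  · by_cases hh : i ∈ daHeld P prio q σ s
    · refine Or.inl ⟨by simp [hh], fun t ht => ?_⟩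
      obtain rfl : s = t := Option.some.inj ht
      exact hh
    · exact Or.inr ⟨by simp [hh], s, rfl, hh⟩

lemma le_daStep (σ : I → ℕ) (i : I) : σ i ≤ daStep P prio q σ i := by
  rcases daStep_cases (P := P) (prio := prio) (q := q) σ i with ⟨h, _⟩ | ⟨h, _⟩ <;> omega

/-- The state reached by the Gale–Shapley iteration is a fixed point. -/
lemma daStep_fixed (hP : ∀ i, ValidPref (P i)) :
    daStep P prio q ((daStep P prio q)^[Fintype.card I * Fintype.card S + 1] (fun _ => 0)) =
      (daStep P prio q)^[Fintype.card I * Fintype.card S + 1] (fun _ => 0) := by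
  apply iterate_fixed_of_measure (daStep P prio q)
    (fun σ => ∑ i : I, min (σ i) (Fintype.card S)) (Fintype.card I * Fintype.card S)
  · intro σ
    calc ∑ i : I, min (σ i) (Fintype.card S) ≤ ∑ _i : I, Fintype.card S :=
          Finset.sum_le_sum (fun i _ => Nat.min_le_right _ _)
      _ = Fintype.card I * Fintype.card S := by
          rw [Finset.sum_const, Finset.card_univ, smul_eq_mul]
  · intro σ hne
    have hex : ∃ i, daStep P prio q σ i ≠ σ i := Function.ne_iff.1 hne
    rcases hex with ⟨i, hi⟩
    apply Finset.sum_lt_sum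
    · intro j _
      exact min_le_min (le_daStep σ j) le_rfl
    · refine ⟨i, Finset.mem_univ i, ?_⟩
      rcases daStep_cases (P := P) (prio := prio) (q := q) σ i with ⟨h, _⟩ | ⟨h, s, hs, _⟩
      · exact absurd h hi
      · have hlen : σ i < (acceptables (P i)).length := (target_spec hP hs).1
        have hcard : (acceptables (P i)).length ≤ Fintype.card S :=
          length_acceptables_le (hP i).1
        rw [h, Nat.min_eq_left (by omega), Nat.min_eq_left (by omega)]
        omega

section Fixed

variable {σ : I → ℕ} (hfix : daStep P prio q σ = σ)

include hfix

lemma all_held (i : I) (s : S) (h : daTarget P σ i = some s) :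
    i ∈ daHeld P prio q σ s := by
  have hc := congrFun hfix i
  rcases daStep_cases (P := P) (prio := prio) (q := q) σ i with ⟨_, h2⟩ | ⟨h1, s', hs', _⟩
  · exact h2 s h
  · rw [h1] at hc; omega

lemma daMatch_eq_target (i : I) : daMatch P prio q σ i = daTarget P σ i := by
  unfold daMatch
  rcases h : daTarget P σ i with _ | s
  · rfl
  · exact if_pos (all_held hfix i s h)

lemma appl_length_le (hprio : ∀ s, ValidPrio (prio s)) (s : S) :
    (appl P prio σ s).length ≤ q s := by
  have hsub : appl P prio σ s ⊆ (appl P prio σ s).take (q s) := by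
    intro j hj
    rw [← daHeld_eq]
    exact all_held hfix j s ((mem_appl hprio).1 hj)
  calc (appl P prio σ s).length ≤ ((appl P prio σ s).take (q s)).length :=
        nodup_subset_length (appl_nodup hprio) hsub
    _ ≤ q s := by rw [List.length_take]; omega

lemma card_matched (hprio : ∀ s, ValidPrio (prio s)) (s : S) :
    (Finset.univ.filter (fun j => daMatch P prio q σ j = some s)).card =
      (appl P prio σ s).length := by
  have h1 : (appl P prio σ s).length =
      (Finset.univ.filter (fun j => daTarget P σ j = some s)).card :=
    list_filter_length_eq_card ⟨(hprio s).1, (hprio s).2⟩ _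
  rw [h1]
  congr 1
  apply Finset.filter_congr
  intro j _
  rw [daMatch_eq_target hfix]

end Fixed

/-- The rejection invariant: whenever student `i` has moved past school `s` on her list,
school `s` has at least `q s` applicants, all of higher priority than `i`. -/
def RejInv (P : I → List (Option S)) (prio : S → List I) (q : S → ℕ) (σ : I → ℕ) : Prop :=
  ∀ (i : I) (s : S), (acceptables (P i)).idxOf s < σ i →
    q s ≤ ((appl P prio σ s).filter
      (fun j => decide ((prio s).idxOf j < (prio s).idxOf i))).length

lemma Q_step (hprio : ∀ s, ValidPrio (prio s)) {σ : I → ℕ} {i : I} {s : S}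
    (hq : q s ≤ ((appl P prio σ s).filter
      (fun j => decide ((prio s).idxOf j < (prio s).idxOf i))).length) :
    q s ≤ ((appl P prio (daStep P prio q σ) s).filter
      (fun j => decide ((prio s).idxOf j < (prio s).idxOf i))).length := by
  set H := daHeld P prio q σ s with hH
  have hHlt : ∀ j ∈ H, (prio s).idxOf j < (prio s).idxOf i :=
    take_key_lt _ _ _ _ (appl_pairwise hprio) hq
  have hHlen : H.length = q s := by
    rw [hH, daHeld_eq, List.length_take]
    have : q s ≤ (appl P prio σ s).length :=
      le_trans hq (List.length_filter_le _ _)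
    omega
  have hHtarget : ∀ j ∈ H, daTarget P (daStep P prio q σ) j = some s := by
    intro j hj
    have hjmem : j ∈ (appl P prio σ s).take (q s) := by
      rw [← daHeld_eq, ← hH]; exact hj
    have hjt : daTarget P σ j = some s :=
      (mem_appl hprio).1 (List.mem_of_mem_take hjmem)
    have hstep : daStep P prio q σ j = σ j := by
      rcases daStep_cases (P := P) (prio := prio) (q := q) σ j with ⟨h1, _⟩ | ⟨_, s', hs', hns'⟩
      · exact h1
      · obtain rfl : s = s' := Option.some.inj (hjt.symm.trans hs')
        refine absurd ?_ hns'
        rw [← hH]; exact hj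
    unfold daTarget
    rw [hstep]
    exact hjt
  have hsub : H ⊆ (appl P prio (daStep P prio q σ) s).filter
      (fun j => decide ((prio s).idxOf j < (prio s).idxOf i)) := by
    intro j hj
    rw [List.mem_filter]
    refine ⟨(mem_appl hprio).2 (hHtarget j hj), by simpa using hHlt j hj⟩
  have hnd : H.Nodup := by
    rw [hH, daHeld_eq]
    exact (appl_nodup hprio).sublist (List.take_sublist _ _)
  calc q s = H.length := hHlen.symm
    _ ≤ _ := nodup_subset_length hnd hsub

lemma Q_of_rejected (hprio : ∀ s, ValidPrio (prio s)) {σ : I → ℕ} {i : I} {s : S}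
    (ht : daTarget P σ i = some s) (hr : i ∉ daHeld P prio q σ s) :
    q s ≤ ((appl P prio σ s).filter
      (fun j => decide ((prio s).idxOf j < (prio s).idxOf i))).length := by
  apply not_take_key_ge _ _ _ _ (appl_pairwise hprio) ((mem_appl hprio).2 ht)
  rw [daHeld_eq] at hr
  exact hr

lemma RejInv_step (hP : ∀ i, ValidPref (P i)) (hprio : ∀ s, ValidPrio (prio s))
    {σ : I → ℕ} (h : RejInv P prio q σ) : RejInv P prio q (daStep P prio q σ) := by
  intro i s hlt
  rcases daStep_cases (P := P) (prio := prio) (q := q) σ i with ⟨h1, _⟩ | ⟨h1, s', hs', hrej⟩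
  · rw [h1] at hlt
    exact Q_step hprio (h i s hlt)
  · rw [h1] at hlt
    by_cases hcase : (acceptables (P i)).idxOf s < σ i
    · exact Q_step hprio (h i s hcase)
    · have heq : (acceptables (P i)).idxOf s = σ i := by omega
      have hmem : s ∈ acceptables (P i) := by
        rw [← List.idxOf_lt_length_iff, heq]
        exact (target_spec hP hs').1
      have hts : daTarget P σ i = some s := target_of_idx hmem heq
      rw [hts] at hs'; injection hs' with hs'; subst hs'
      exact Q_step hprio (Q_of_rejected hprio hts hrej)

lemma RejInv_iterate (hP : ∀ i, ValidPref (P i)) (hprio : ∀ s, ValidPrio (prio s)) (n : ℕ) :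
    RejInv P prio q ((daStep P prio q)^[n] (fun _ => 0)) := by
  induction n with
  | zero => intro i s h; simp at h
  | succ n ih =>
    rw [Function.iterate_succ_apply']
    exact RejInv_step hP hprio ih

end DA

section Spec

variable {I S : Type*} [Fintype I] [DecidableEq I] [Fintype S] [DecidableEq S]
variable {P : I → List (Option S)} {prio : S → List I} {q : S → ℕ}

lemma mem_acc_of_not_none_lt {p : List (Option S)} (hp : ValidPref p) {t : S}
    (h : ¬ prefLt p none (some t)) : t ∈ acceptables p := by
  unfold prefLt at h
  push_neg at h
  have hne : p.idxOf (some t) ≠ p.idxOf none := by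
    intro he
    have := (List.idxOf_inj (hp.2 (some t))).1 he
    simp at this
  exact (mem_acceptables_iff hp t).2 (by omega)

lemma OptInv_step (hP : ∀ i, ValidPref (P i)) (hprio : ∀ s, ValidPrio (prio s))
    {μ : I → Option S} (hμM : IsMatching q μ) (hμS : IsStable P prio q μ) {σ : I → ℕ}
    (h : ∀ j t, μ j = some t → σ j ≤ (acceptables (P j)).idxOf t) :
    ∀ j t, μ j = some t → daStep P prio q σ j ≤ (acceptables (P j)).idxOf t := by
  intro j t hjt
  rcases daStep_cases (P := P) (prio := prio) (q := q) σ j with ⟨h1, _⟩ | ⟨h1, s', hs', hrej⟩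
  · rw [h1]; exact h j t hjt
  · rw [h1]
    have hle := h j t hjt
    rcases Nat.lt_or_ge (σ j) ((acceptables (P j)).idxOf t) with hlt | hge
    · omega
    have heq : (acceptables (P j)).idxOf t = σ j := by omega
    have htacc : t ∈ acceptables (P j) :=
      mem_acc_of_not_none_lt (hP j) (by
        have := hμS.1 j
        rw [hjt] at this
        exact this)
    have hts : daTarget P σ j = some t := target_of_idx htacc heq
    rw [(Option.some.inj (hs'.symm.trans hts) : s' = t)] at hrej
    set A := appl P prio σ t with hA
    have hjA : j ∈ A := (mem_appl hprio).2 hts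
    have hjnt : j ∉ A.take (q t) := by
      rw [hA, ← daHeld_eq]; exact hrej
    have hqle : q t ≤ (A.filter
        (fun y => decide ((prio t).idxOf y < (prio t).idxOf j))).length :=
      not_take_key_ge _ _ _ _ (appl_pairwise hprio) hjA hjnt
    have hHlt : ∀ x ∈ A.take (q t), (prio t).idxOf x < (prio t).idxOf j :=
      take_key_lt _ _ _ _ (appl_pairwise hprio) hqle
    have hHlen : (A.take (q t)).length = q t := by
      rw [List.length_take]
      have : q t ≤ A.length := le_trans hqle (List.length_filter_le _ _)
      omega
    by_cases hcaseA : ∀ x ∈ A.take (q t), μ x = some t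
    · exfalso
      have hsub : insert j (A.take (q t)).toFinset ⊆
          Finset.univ.filter (fun y => μ y = some t) := by
        intro x hx
        rcases Finset.mem_insert.1 hx with rfl | hx
        · exact Finset.mem_filter.2 ⟨Finset.mem_univ _, hjt⟩
        · exact Finset.mem_filter.2 ⟨Finset.mem_univ _, hcaseA x (List.mem_toFinset.1 hx)⟩
      have hnj : j ∉ (A.take (q t)).toFinset := fun hc => hjnt (List.mem_toFinset.1 hc)
      have hndH : (A.take (q t)).Nodup := (appl_nodup hprio).sublist (List.take_sublist _ _)
      have hcard := Finset.card_le_card hsub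
      rw [Finset.card_insert_of_notMem hnj, List.toFinset_card_of_nodup hndH, hHlen] at hcard
      have := hμM t
      omega
    · push_neg at hcaseA
      obtain ⟨x, hxH, hxne⟩ := hcaseA
      have hxt : daTarget P σ x = some t := (mem_appl hprio).1 (List.mem_of_mem_take hxH)
      have hxspec := target_spec hP hxt
      exfalso
      apply hμS.2 x
      refine ⟨t, ?_, Or.inr ⟨j, hjt, hHlt x hxH⟩⟩
      rcases hμx : μ x with _ | u
      · show (P x).idxOf (some t) < (P x).idxOf none
        exact (mem_acceptables_iff (hP x) t).1 hxspec.2.1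
      · have hune : u ≠ t := fun he => hxne (by rw [hμx, he])
        have huacc : u ∈ acceptables (P x) :=
          mem_acc_of_not_none_lt (hP x) (by
            have := hμS.1 x
            rw [hμx] at this
            exact this)
        have h2 := h x u hμx
        have hidxlt : (acceptables (P x)).idxOf t < (acceptables (P x)).idxOf u := by
          have hne : (acceptables (P x)).idxOf t ≠ (acceptables (P x)).idxOf u :=
            fun he => hune ((List.idxOf_inj huacc).1 he.symm)
          have := hxspec.2.2
          omega
        show (P x).idxOf (some t) < (P x).idxOf (some u)
        exact (indexOf_acc_lt_iff hxspec.2.1 huacc).1 hidxlt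

theorem GS_spec (hP : ∀ i, ValidPref (P i)) (hprio : ∀ s, ValidPrio (prio s)) :
    IsMatching q (GS P prio q) ∧
    IsStable P prio q (GS P prio q) ∧
    (∀ i s, GS P prio q i = some s →
      s ∈ acceptables (P i) ∧ (P i).idxOf (some s) < (P i).idxOf none) ∧
    (∀ μ, IsMatching q μ → IsStable P prio q μ →
      ∀ i, ¬ prefLt (P i) (μ i) (GS P prio q i)) := by
  set σ := (daStep P prio q)^[Fintype.card I * Fintype.card S + 1]
    (fun _ => 0) with hσ
  have hfix : daStep P prio q σ = σ := daStep_fixed hP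
  have hν : ∀ i, GS P prio q i = daTarget P σ i := by
    intro i
    rw [GS_eq_daMatch]
    exact daMatch_eq_target hfix i
  have hνM : GS P prio q = fun i => daMatch P prio q σ i := GS_eq_daMatch
  have hval : ∀ i s, GS P prio q i = some s →
      s ∈ acceptables (P i) ∧ (acceptables (P i)).idxOf s = σ i ∧
        (P i).idxOf (some s) < (P i).idxOf none := by
    intro i s h
    rw [hν i] at h
    have := target_spec hP h
    exact ⟨this.2.1, this.2.2, (mem_acceptables_iff (hP i) s).1 this.2.1⟩
  have hIR : IndividuallyRational P (GS P prio q) := by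
    intro i
    rcases hgs : GS P prio q i with _ | s
    · show ¬ (P i).idxOf none < (P i).idxOf none
      omega
    · show ¬ (P i).idxOf none < (P i).idxOf (some s)
      have := (hval i s hgs).2.2
      omega
  have hIM : IsMatching q (GS P prio q) := by
    intro s
    have h1 : (Finset.univ.filter (fun i => GS P prio q i = some s)).card =
        (appl P prio σ s).length := card_matched hfix hprio s
    rw [h1]
    exact appl_length_le hfix hprio s
  have hRej : RejInv P prio q σ := RejInv_iterate hP hprio _
  have hNB : ∀ i, ¬ BlockingStudent P prio q (GS P prio q) i := by
    rintro i ⟨s, hpref, hcond⟩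
    have hsacc : s ∈ acceptables (P i) ∧ (acceptables (P i)).idxOf s < σ i := by
      rcases hgs : GS P prio q i with _ | t
      · rw [hgs] at hpref
        have hpref' : (P i).idxOf (some s) < (P i).idxOf none := hpref
        have hs : s ∈ acceptables (P i) := (mem_acceptables_iff (hP i) s).2 hpref'
        have htn : daTarget P σ i = none := by rw [← hν i]; exact hgs
        have hlen : (acceptables (P i)).length ≤ σ i := by
          unfold daTarget at htn
          exact List.getElem?_eq_none_iff.1 htn
        have := List.idxOf_lt_length_iff.2 hs
        exact ⟨hs, by omega⟩
      · obtain ⟨ht, hidx, _⟩ := hval i t hgs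
        rw [hgs] at hpref
        have hpref' : (P i).idxOf (some s) < (P i).idxOf (some t) := hpref
        have hs : s ∈ acceptables (P i) := by
          apply (mem_acceptables_iff (hP i) s).2
          have := (mem_acceptables_iff (hP i) t).1 ht
          omega
        have := (indexOf_acc_lt_iff hs ht).2 hpref'
        exact ⟨hs, by omega⟩
    have hq' := hRej i s hsacc.2
    have hle := appl_length_le hfix hprio s
    have hflt : ((appl P prio σ s).filter
        (fun j => decide ((prio s).idxOf j < (prio s).idxOf i))).length ≤
        (appl P prio σ s).length := List.length_filter_le _ _
    have hfull : ((appl P prio σ s).filter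
        (fun j => decide ((prio s).idxOf j < (prio s).idxOf i))).length =
        (appl P prio σ s).length := by omega
    rcases hcond with hcap | ⟨j, hj, hji⟩
    · have h1 : (Finset.univ.filter (fun j => GS P prio q j = some s)).card =
          (appl P prio σ s).length := card_matched hfix hprio s
      rw [h1] at hcap
      omega
    · have hjA : j ∈ appl P prio σ s := (mem_appl hprio).2 (by rw [← hν j]; exact hj)
      have hall : ∀ x ∈ appl P prio σ s,
          (prio s).idxOf x < (prio s).idxOf i := by
        intro x hx
        have := (List.length_filter_eq_length_iff).1 hfull x hx
        simpa using this
      have := hall j hjA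
      have hji' : (prio s).idxOf i < (prio s).idxOf j := hji
      omega
  refine ⟨hIM, ⟨hIR, hNB⟩, fun i s h => ⟨(hval i s h).1, (hval i s h).2.2⟩, ?_⟩
  intro μ hμM hμS i
  have hled : ∀ j t, μ j = some t → σ j ≤ (acceptables (P j)).idxOf t := by
    rw [hσ]
    generalize Fintype.card I * Fintype.card S + 1 = n
    induction n with
    | zero => intro j t _; simp
    | succ n ih =>
      rw [Function.iterate_succ_apply']
      exact OptInv_step hP hprio hμM hμS ih
  rcases hμi : μ i with _ | s
  · exact hIR i
  · have hsacc : s ∈ acceptables (P i) :=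
      mem_acc_of_not_none_lt (hP i) (by
        have := hμS.1 i
        rw [hμi] at this
        exact this)
    have hle := hled i s hμi
    have hslen : (acceptables (P i)).idxOf s < (acceptables (P i)).length :=
      List.idxOf_lt_length_iff.2 hsacc
    have htarget : daTarget P σ i = some ((acceptables (P i))[σ i]'(by omega)) := by
      unfold daTarget
      exact List.getElem?_eq_getElem _
    set t := (acceptables (P i))[σ i]'(by omega) with hteq
    have hgs : GS P prio q i = some t := by rw [hν i]; exact htarget
    obtain ⟨htacc, htidx, _⟩ := hval i t hgs
    rw [hgs]
    show ¬ (P i).idxOf (some s) < (P i).idxOf (some t)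
    intro hlt
    have := (indexOf_acc_lt_iff hsacc htacc).2 hlt
    omega

end Spec

section Main

variable {I S : Type*} [Fintype I] [DecidableEq I] [Fintype S] [DecidableEq S]

lemma mem_take_of_indexOf_lt {α : Type*} [DecidableEq α] :
    ∀ (l : List α) (k : ℕ) (a : α), a ∈ l → l.idxOf a < k → a ∈ l.take k := by
  intro l
  induction l with
  | nil => intro k a ha; simp at ha
  | cons b t ih =>
    intro k a ha hk
    rcases k with _ | k'
    · omega
    rw [List.take_succ_cons]
    by_cases hba : b = a
    · subst hba; exact List.mem_cons_self
    · have hat : a ∈ t := by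
        rcases List.mem_cons.1 ha with rfl | h
        · exact absurd rfl hba
        · exact h
      rw [List.idxOf_cons_ne _ hba] at hk
      exact List.mem_cons_of_mem _ (ih k' a hat (by omega))

lemma indexOf_lt_k_of_mem_take {α : Type*} [DecidableEq α] {l : List α} {k : ℕ} {a : α}
    (h : a ∈ l.take k) : l.idxOf a < k := by
  have h1 : l.idxOf a = (l.take k).idxOf a := indexOf_take h
  have h2 : (l.take k).idxOf a < (l.take k).length := List.idxOf_lt_length_iff.2 h
  have h3 : (l.take k).length ≤ k := by rw [List.length_take]; omega
  omega

lemma matched_card_sum (f : I → Option S) :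
    (Finset.univ.filter (fun i => f i ≠ none)).card =
      ∑ s : S, (Finset.univ.filter (fun i => f i = some s)).card := by
  have he : Finset.univ.filter (fun i => f i ≠ none) =
      Finset.univ.biUnion (fun s : S => Finset.univ.filter (fun i => f i = some s)) := by
    ext i
    simp [Option.ne_none_iff_exists']
  rw [he]
  apply Finset.card_biUnion
  intro s _ t _ hst
  simp only [Function.onFun]
  rw [Finset.disjoint_left]
  intro i hi hj
  rw [Finset.mem_filter] at hi hj
  exact hst (Option.some.inj (hi.2.symm.trans hj.2))

lemma indexOf_ne_of_ne {p : List (Option S)} (hp : ValidPref p) {a b : Option S}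
    (h : a ≠ b) : p.idxOf a ≠ p.idxOf b := by
  intro he
  exact h ((List.idxOf_inj (hp.2 a)).1 he)

end Main


/-- Lemma 1: for `k > 1`, `GS^k(P,≻,q)` is stable at `(P,≻,q)` iff
`GS^k(P,≻,q) = GS(P,≻,q)`. -/
theorem gsk_stable_iff_eq_gs
    {I S : Type*} [Fintype I] [DecidableEq I] [Fintype S] [DecidableEq S]
    (hIS : Fintype.card S < Fintype.card I)
    (P : I → List (Option S)) (prio : S → List I) (q : S → ℕ)
    (hP : ∀ i, ValidPref (P i)) (hprio : ∀ s, ValidPrio (prio s))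
    (k : ℕ) (hk : 1 < k) :
    IsStable P prio q (GSk k P prio q) ↔ GSk k P prio q = GS P prio q := by
  set Pk : I → List (Option S) := fun i => truncate (P i) k with hPkdef
  have hGSk : GSk k P prio q = GS Pk prio q := rfl
  have hPk : ∀ i, ValidPref (Pk i) := fun i => truncate_valid (hP i) k
  obtain ⟨hμM, hμSk, hμval, hμopt⟩ := GS_spec (P := Pk) (prio := prio) (q := q) hPk hprio
  obtain ⟨hνM, hνS, hνval, hνopt⟩ := GS_spec (P := P) (prio := prio) (q := q) hP hprio
  rw [hGSk]
  have hacck : ∀ i, acceptables (Pk i) = (acceptables (P i)).take k :=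
    fun i => acceptables_truncate k
  have hμmem : ∀ i s, GS Pk prio q i = some s → s ∈ (acceptables (P i)).take k :=
    fun i s h => by rw [← hacck i]; exact (hμval i s h).1
  have hμaccP : ∀ i s, GS Pk prio q i = some s → s ∈ acceptables (P i) :=
    fun i s h => List.mem_of_mem_take (hμmem i s h)
  constructor
  · intro hst
    have opt1 : ∀ i, ¬ prefLt (P i) (GS Pk prio q i) (GS P prio q i) :=
      hνopt (GS Pk prio q) hμM hst
    have hcards : ∀ s, (Finset.univ.filter (fun i => GS P prio q i = some s)).card ≤
        (Finset.univ.filter (fun i => GS Pk prio q i = some s)).card := by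
      intro s
      by_contra hcon
      push_neg at hcon
      have hnsub : ¬ (Finset.univ.filter (fun i => GS P prio q i = some s)) ⊆
          (Finset.univ.filter (fun i => GS Pk prio q i = some s)) := by
        intro hsub
        have := Finset.card_le_card hsub
        omega
      obtain ⟨i, hiν, hiμ⟩ := Finset.not_subset.1 hnsub
      have hνi : GS P prio q i = some s := (Finset.mem_filter.1 hiν).2
      have hμi : GS Pk prio q i ≠ some s :=
        fun h => hiμ (Finset.mem_filter.2 ⟨Finset.mem_univ _, h⟩)
      refine absurd ⟨s, ?_, Or.inl ?_⟩ (hst.2 i)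
      · -- prefLt (P i) (some s) (GS Pk prio q i)
        have h1 := opt1 i
        rw [hνi] at h1
        have h1' : ¬ (P i).idxOf (GS Pk prio q i) < (P i).idxOf (some s) := h1
        have hne := indexOf_ne_of_ne (hP i) (fun he => hμi he.symm)
          (a := some s) (b := GS Pk prio q i)
        show (P i).idxOf (some s) < (P i).idxOf (GS Pk prio q i)
        omega
      · have := hνM s
        omega
    have hmatched : ∀ i, GS Pk prio q i ≠ none → GS P prio q i ≠ none := by
      intro i hne hν0
      obtain ⟨s, hs⟩ := Option.ne_none_iff_exists'.1 hne
      have h1 := opt1 i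
      rw [hs, hν0] at h1
      exact h1 ((mem_acceptables_iff (hP i) s).1 (hμaccP i s hs))
    have hMsub : Finset.univ.filter (fun i => GS Pk prio q i ≠ none) ⊆
        Finset.univ.filter (fun i => GS P prio q i ≠ none) := by
      intro i hi
      rw [Finset.mem_filter] at hi ⊢
      exact ⟨Finset.mem_univ _, hmatched i hi.2⟩
    have hsumν := matched_card_sum (GS P prio q)
    have hsumμ := matched_card_sum (GS Pk prio q)
    have hsumle : (Finset.univ.filter (fun i => GS P prio q i ≠ none)).card ≤
        (Finset.univ.filter (fun i => GS Pk prio q i ≠ none)).card := by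
      rw [hsumν, hsumμ]
      exact Finset.sum_le_sum (fun s _ => hcards s)
    have hMeq : Finset.univ.filter (fun i => GS Pk prio q i ≠ none) =
        Finset.univ.filter (fun i => GS P prio q i ≠ none) :=
      Finset.eq_of_subset_of_card_le hMsub hsumle
    have hnone : ∀ i, GS Pk prio q i = none → GS P prio q i = none := by
      intro i h0
      by_contra hc
      have : i ∈ Finset.univ.filter (fun i => GS P prio q i ≠ none) :=
        Finset.mem_filter.2 ⟨Finset.mem_univ _, hc⟩
      rw [← hMeq, Finset.mem_filter] at this
      exact this.2 h0
    have hνmem : ∀ i t, GS P prio q i = some t → t ∈ (acceptables (P i)).take k := by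
      intro i t hνi
      rcases hμi : GS Pk prio q i with _ | u
      · rw [hnone i hμi] at hνi
        exact absurd hνi (by simp)
      · have huk : u ∈ (acceptables (P i)).take k := hμmem i u hμi
        have h1 := opt1 i
        rw [hνi, hμi] at h1
        have h1' : ¬ (P i).idxOf (some u) < (P i).idxOf (some t) := h1
        have htacc : t ∈ acceptables (P i) := (hνval i t hνi).1
        have huacc : u ∈ acceptables (P i) := List.mem_of_mem_take huk
        have hlt : ¬ ((acceptables (P i)).idxOf u < (acceptables (P i)).idxOf t) :=
          fun hc => h1' ((indexOf_acc_lt_iff huacc htacc).1 hc)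
        have hu_k : (acceptables (P i)).idxOf u < k := indexOf_lt_k_of_mem_take huk
        exact mem_take_of_indexOf_lt _ _ _ htacc (by omega)
    have hIRk : IndividuallyRational Pk (GS P prio q) := by
      intro i
      rcases hνi : GS P prio q i with _ | t
      · show ¬ (Pk i).idxOf none < (Pk i).idxOf none
        omega
      · have htk' : t ∈ acceptables (Pk i) := by rw [hacck i]; exact hνmem i t hνi
        have := (mem_acceptables_iff (hPk i) t).1 htk'
        show ¬ (Pk i).idxOf none < (Pk i).idxOf (some t)
        omega
    have hNBk : ∀ i, ¬ BlockingStudent Pk prio q (GS P prio q) i := by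
      rintro i ⟨s, hpref, hcond⟩
      refine absurd ⟨s, ?_, hcond⟩ (hνS.2 i)
      rcases hνi : GS P prio q i with _ | t
      · rw [hνi] at hpref
        have hpref' : (Pk i).idxOf (some s) < (Pk i).idxOf none := hpref
        have hs : s ∈ acceptables (Pk i) := (mem_acceptables_iff (hPk i) s).2 hpref'
        have hsk : s ∈ (acceptables (P i)).take k := by rw [← hacck i]; exact hs
        show (P i).idxOf (some s) < (P i).idxOf none
        exact (mem_acceptables_iff (hP i) s).1 (List.mem_of_mem_take hsk)
      · rw [hνi] at hpref
        have hpref' : (Pk i).idxOf (some s) < (Pk i).idxOf (some t) := hpref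
        have htk : t ∈ (acceptables (P i)).take k := hνmem i t hνi
        have htk' : t ∈ acceptables (Pk i) := by rw [hacck i]; exact htk
        have hts := (mem_acceptables_iff (hPk i) t).1 htk'
        have hsn : (Pk i).idxOf (some s) < (Pk i).idxOf none := by omega
        have hs : s ∈ acceptables (Pk i) := (mem_acceptables_iff (hPk i) s).2 hsn
        have hsk : s ∈ (acceptables (P i)).take k := by rw [← hacck i]; exact hs
        have h2 : (acceptables (Pk i)).idxOf s < (acceptables (Pk i)).idxOf t :=
          (indexOf_acc_lt_iff hs htk').2 hpref'
        rw [hacck i, ← indexOf_take hsk, ← indexOf_take htk] at h2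
        show (P i).idxOf (some s) < (P i).idxOf (some t)
        exact (indexOf_acc_lt_iff (List.mem_of_mem_take hsk)
          (List.mem_of_mem_take htk)).1 h2
    have opt2 : ∀ i, ¬ prefLt (Pk i) (GS P prio q i) (GS Pk prio q i) :=
      hμopt (GS P prio q) hνM ⟨hIRk, hNBk⟩
    funext i
    rcases hμi : GS Pk prio q i with _ | t
    · exact (hnone i hμi).symm
    · obtain ⟨u, hu⟩ : ∃ u, GS P prio q i = some u :=
        Option.ne_none_iff_exists'.1 (hmatched i (by rw [hμi]; simp))
      have htk : t ∈ (acceptables (P i)).take k := hμmem i t hμi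
      have huk : u ∈ (acceptables (P i)).take k := hνmem i u hu
      have htacc : t ∈ acceptables (P i) := List.mem_of_mem_take htk
      have huacc : u ∈ acceptables (P i) := List.mem_of_mem_take huk
      have h1 := opt1 i
      rw [hμi, hu] at h1
      have h1' : ¬ (P i).idxOf (some t) < (P i).idxOf (some u) := h1
      have hle1 : ¬ ((acceptables (P i)).idxOf t < (acceptables (P i)).idxOf u) :=
        fun hc => h1' ((indexOf_acc_lt_iff htacc huacc).1 hc)
      have h2 := opt2 i
      rw [hμi, hu] at h2
      have h2' : ¬ (Pk i).idxOf (some u) < (Pk i).idxOf (some t) := h2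
      have htk' : t ∈ acceptables (Pk i) := by rw [hacck i]; exact htk
      have huk' : u ∈ acceptables (Pk i) := by rw [hacck i]; exact huk
      have hle2 : ¬ ((acceptables (Pk i)).idxOf u < (acceptables (Pk i)).idxOf t) :=
        fun hc => h2' ((indexOf_acc_lt_iff huk' htk').1 hc)
      rw [hacck i, ← indexOf_take huk, ← indexOf_take htk] at hle2
      have heq : (acceptables (P i)).idxOf t = (acceptables (P i)).idxOf u := by omega
      have : t = u := (List.idxOf_inj htacc).1 heq
      rw [hu, this]
  · intro h
    rw [h]
    exact hνS


end SchoolChoice
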